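/- arXiv:2605.20545 — 2 statements merged into one kernel-verified Lean document; each statement's English description precedes it below -/
import Mathlib

section
/- Let μ be a probability measure on ℝ with finite second moment and ν another such measure. Suppose T is the monotone (nondecreasing) rearrangement map given by T = F_ν^{-1} ∘ F_μ, where F_μ, F_ν are cumulative distribution functions and μ is atomless. Then T pushes μ forward to ν and minimizes ∫ (S(x) − x)² dμ(x) over all measurable S with S_#μ = ν. -/
open MeasureTheory

open ProbabilityTheory Set Filter Function
open scoped ENNReal NNReal Topology

lemma MR_cdf_cont (μ : Measure ℝ) [IsProbabilityMeasure μ] [NullSingletonClass μ] :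
    Continuous (cdf μ) := by
  rw [continuous_iff_continuousAt]
  intro a
  have hmono : Monotone (cdf μ) := monotone_cdf μ
  rw [hmono.continuousAt_iff_leftLim_eq_rightLim]
  have h1 : Function.rightLim (cdf μ) a = cdf μ a := (cdf μ).rightLim_eq a
  have h2 : (cdf μ).measure {a} = 0 := by rw [measure_cdf]; exact measure_singleton a
  rw [StieltjesFunction.measure_singleton] at h2
  have h3 : cdf μ a - leftLim (cdf μ) a ≤ 0 := by
    simpa [ENNReal.ofReal_eq_zero] using h2
  have hle : leftLim (cdf μ) a ≤ cdf μ a := hmono.leftLim_le le_rfl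
  rw [h1]
  linarith

lemma MR_meas_cdf_le (μ : Measure ℝ) [IsProbabilityMeasure μ] [NullSingletonClass μ]
    {u : ℝ} (hu : u ≤ 1) : μ {x | cdf μ x ≤ u} = ENNReal.ofReal u := by
  set A := {x | cdf μ x ≤ u} with hA
  have hcont := MR_cdf_cont μ
  have hmono := monotone_cdf μ
  have hclosed : IsClosed A := isClosed_le hcont continuous_const
  have hlower : IsLowerSet A := fun a b hba ha => le_trans (hmono hba) ha
  by_cases hne : A.Nonempty
  · by_cases hbdd : BddAbove A
    · have ha : sSup A ∈ A := hclosed.csSup_mem hne hbdd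
      have hAeq : A = Iic (sSup A) :=
        subset_antisymm (fun x hx => le_csSup hbdd hx) (fun x hx => hlower hx ha)
      have hcdf_le : cdf μ (sSup A) ≤ u := ha
      have hceq : cdf μ (sSup A) = u := by
        rcases eq_or_lt_of_le hcdf_le with h | h
        · exact h
        · exfalso
          have hu1 : u < 1 := by
            by_contra hge
            push_neg at hge
            have : A = univ := eq_univ_of_forall fun x => le_trans (cdf_le_one μ x) hge
            rw [this] at hbdd
            exact (not_bddAbove_univ (α := ℝ)) hbdd
          obtain ⟨b, hb⟩ := ((tendsto_cdf_atTop μ).eventually_const_lt hu1).exists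
          have hsb : sSup A ≤ b := by
            by_contra hlt
            push_neg at hlt
            exact absurd (hlower hlt.le ha : b ∈ A) (by simpa [hA] using hb.not_ge)
          obtain ⟨c, hc, hcu⟩ := intermediate_value_Icc hsb hcont.continuousOn
            ⟨h.le, hb.le⟩
          have hcA : c ∈ A := le_of_eq hcu
          have : cdf μ c ≤ cdf μ (sSup A) := hmono (le_csSup hbdd hcA)
          rw [hcu] at this
          linarith
      rw [hAeq, ← ofReal_cdf μ (sSup A), hceq]
    · have hA_univ : A = univ := by
        rw [not_bddAbove_iff] at hbdd
        refine eq_univ_of_forall fun x => ?_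
        obtain ⟨y, hyA, hxy⟩ := hbdd x
        exact hlower hxy.le hyA
      have h1u : 1 ≤ u :=
        le_of_tendsto (tendsto_cdf_atTop μ)
          (Eventually.of_forall fun x => (eq_univ_iff_forall.1 hA_univ x : x ∈ A))
      have : u = 1 := le_antisymm hu h1u
      simp [hA_univ, this]
  · rw [Set.not_nonempty_iff_eq_empty] at hne
    rw [hne, measure_empty]
    symm
    rw [ENNReal.ofReal_eq_zero]
    by_contra hpos
    push_neg at hpos
    obtain ⟨x, hx⟩ := ((tendsto_cdf_atBot μ).eventually_lt_const hpos).exists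
    have hxA : x ∈ A := le_of_lt hx
    rw [hne] at hxA
    exact hxA

lemma MR_meas_cdf_ge_one (μ : Measure ℝ) [IsProbabilityMeasure μ] [NullSingletonClass μ] :
    μ {x | 1 ≤ cdf μ x} = 0 := by
  set B : Set ℝ := {x | 1 ≤ cdf μ x} with hB
  have key : ∀ u : ℝ, 0 ≤ u → u < 1 → μ B ≤ ENNReal.ofReal (1 - u) := by
    intro u hu0 hu1
    set C : Set ℝ := {x | cdf μ x ≤ u} with hC
    have hdisj : Disjoint B C := by
      rw [Set.disjoint_left]
      intro x hx1 hx2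
      exact absurd (le_trans hx1 hx2) (not_le.2 hu1)
    have hmeas : MeasurableSet C :=
      measurableSet_le (monotone_cdf μ).measurable measurable_const
    have hle : μ B + μ C ≤ 1 := by
      rw [← measure_union hdisj hmeas]
      exact prob_le_one
    rw [MR_meas_cdf_le μ hu1.le] at hle
    have h1 : (1 : ℝ≥0∞) = ENNReal.ofReal (1 - u) + ENNReal.ofReal u := by
      rw [← ENNReal.ofReal_add (by linarith) hu0]
      norm_num
    rw [h1] at hle
    exact ENNReal.le_of_add_le_add_right ENNReal.ofReal_ne_top hle
  by_contra h
  set a := (μ B).toReal with hadef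
  have hane : μ B ≠ ⊤ := measure_ne_top μ _
  have hapos : 0 < a := ENNReal.toReal_pos h hane
  have hale : a ≤ 1 := by
    have h2 : μ B ≤ 1 := prob_le_one
    calc a ≤ (1 : ℝ≥0∞).toReal := ENNReal.toReal_mono ENNReal.one_ne_top h2
      _ = 1 := by simp
  have hlt : ENNReal.ofReal (1 - (1 - a / 2)) < μ B := by
    rw [show (1 : ℝ) - (1 - a / 2) = a / 2 by ring, ← ENNReal.ofReal_toReal hane, ← hadef]
    exact (ENNReal.ofReal_lt_ofReal_iff_of_nonneg (by linarith)).2 (by linarith)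
  exact absurd (key (1 - a / 2) (by linarith) (by linarith)) (not_le.2 hlt)

lemma MR_galois (ν : Measure ℝ) [IsProbabilityMeasure ν] {u : ℝ} (h0 : 0 < u) (h1 : u < 1)
    (t : ℝ) : sInf {y | u ≤ cdf ν y} ≤ t ↔ u ≤ cdf ν t := by
  set Sx := {y | u ≤ cdf ν y} with hSx
  have hne : Sx.Nonempty := by
    obtain ⟨y, hy⟩ := ((tendsto_cdf_atTop ν).eventually_const_lt h1).exists
    exact ⟨y, hy.le⟩
  have hbdd : BddBelow Sx := by
    obtain ⟨y0, hy0⟩ := ((tendsto_cdf_atBot ν).eventually_lt_const h0).exists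
    refine ⟨y0, fun y hy => ?_⟩
    by_contra hlt
    push_neg at hlt
    exact absurd (le_trans hy (monotone_cdf ν hlt.le)) (not_le.2 hy0)
  have hmem : sInf Sx ∈ Sx := by
    show u ≤ cdf ν (sInf Sx)
    rw [← (cdf ν).iInf_Ioi_eq (sInf Sx)]
    haveI : Nonempty ↥(Ioi (sInf Sx)) := ⟨⟨sInf Sx + 1, by simp⟩⟩
    refine le_ciInf fun r => ?_
    obtain ⟨y, hySx, hyr⟩ := exists_lt_of_csInf_lt hne r.2
    exact le_trans hySx (monotone_cdf ν hyr.le)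
  constructor
  · intro h
    exact le_trans hmem (monotone_cdf ν h)
  · intro h
    exact csInf_le hbdd h

noncomputable def MRe (x s : ℝ) : ℝ :=
  (Ico (0:ℝ) x).indicator (fun _ => (1:ℝ)) s - (Ico x (0:ℝ)).indicator (fun _ => (1:ℝ)) s

lemma MRe_int (x : ℝ) : Integrable (MRe x) (volume : Measure ℝ) := by
  refine Integrable.sub ?_ ?_ <;>
  · rw [integrable_indicator_iff measurableSet_Ico]
    exact integrableOn_const measure_Ico_lt_top.ne (by simp)

lemma MRe_integral (x : ℝ) : ∫ s, MRe x s = x := by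
  unfold MRe
  rw [integral_sub, integral_indicator_const (1:ℝ) measurableSet_Ico,
    integral_indicator_const (1:ℝ) measurableSet_Ico, measureReal_def, measureReal_def,
    Real.volume_Ico, Real.volume_Ico]
  · rw [ENNReal.toReal_ofReal', ENNReal.toReal_ofReal', smul_eq_mul, smul_eq_mul,
      mul_one, mul_one]
    rcases le_total 0 x with h | h
    · rw [max_eq_left (by linarith), max_eq_right (by linarith)]
      ring
    · rw [max_eq_right (by linarith), max_eq_left (by linarith)]
      ring
  · rw [integrable_indicator_iff measurableSet_Ico]
    exact integrableOn_const measure_Ico_lt_top.ne (by simp)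
  · rw [integrable_indicator_iff measurableSet_Ico]
    exact integrableOn_const measure_Ico_lt_top.ne (by simp)

lemma MRe_abs_integral (x : ℝ) : ∫ s, |MRe x s| = |x| := by
  rcases le_total 0 x with h | h
  · have he : (Ico x (0:ℝ)) = ∅ := Ico_eq_empty (not_lt.2 h)
    have : ∀ s, |MRe x s| = MRe x s := by
      intro s
      rw [abs_eq_self]
      unfold MRe
      rw [he]
      simp [Set.indicator_nonneg (fun _ _ => zero_le_one)]
    simp_rw [this]
    rw [MRe_integral, abs_of_nonneg h]
  · have he : (Ico (0:ℝ) x) = ∅ := Ico_eq_empty (not_lt.2 h)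
    have : ∀ s, |MRe x s| = -MRe x s := by
      intro s
      rw [abs_eq_neg_self]
      unfold MRe
      rw [he]
      simp [Set.indicator_nonneg (fun _ _ => zero_le_one)]
    simp_rw [this]
    rw [integral_neg, MRe_integral, abs_of_nonpos h]

lemma MRe_meas : Measurable (fun p : ℝ × ℝ => MRe p.1 p.2) := by
  have h1 : (fun p : ℝ × ℝ => (Ico (0:ℝ) p.1).indicator (fun _ => (1:ℝ)) p.2)
      = {p : ℝ × ℝ | 0 ≤ p.2 ∧ p.2 < p.1}.indicator (fun _ => (1:ℝ)) := by
    funext p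
    by_cases h : 0 ≤ p.2 ∧ p.2 < p.1 <;> simp [Set.indicator, Set.mem_Ico, h]
  have h2 : (fun p : ℝ × ℝ => (Ico p.1 (0:ℝ)).indicator (fun _ => (1:ℝ)) p.2)
      = {p : ℝ × ℝ | p.1 ≤ p.2 ∧ p.2 < 0}.indicator (fun _ => (1:ℝ)) := by
    funext p
    by_cases h : p.1 ≤ p.2 ∧ p.2 < 0 <;> simp [Set.indicator, Set.mem_Ico, h]
  have m1 : MeasurableSet {p : ℝ × ℝ | 0 ≤ p.2 ∧ p.2 < p.1} :=
    (measurableSet_le measurable_const measurable_snd).inter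
      (measurableSet_lt measurable_snd measurable_fst)
  have m2 : MeasurableSet {p : ℝ × ℝ | p.1 ≤ p.2 ∧ p.2 < 0} :=
    (measurableSet_le measurable_fst measurable_snd).inter
      (measurableSet_lt measurable_snd measurable_const)
  have : (fun p : ℝ × ℝ => MRe p.1 p.2)
      = fun p => {p : ℝ × ℝ | 0 ≤ p.2 ∧ p.2 < p.1}.indicator (fun _ => (1:ℝ)) p
        - {p : ℝ × ℝ | p.1 ≤ p.2 ∧ p.2 < 0}.indicator (fun _ => (1:ℝ)) p := by
    funext p
    rw [← h1, ← h2]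
    rfl
  rw [this]
  exact ((measurable_const.indicator m1).sub (measurable_const.indicator m2))

lemma MRe_of_nonneg (x : ℝ) {s : ℝ} (hs : 0 ≤ s) :
    MRe x s = if s < x then 1 else 0 := by
  unfold MRe
  by_cases h : s < x <;> simp [Set.indicator, Set.mem_Ico, hs, h, not_lt.2 hs]

lemma MRe_of_neg (x : ℝ) {s : ℝ} (hs : s < 0) :
    MRe x s = if x ≤ s then -1 else 0 := by
  unfold MRe
  by_cases h : x ≤ s <;> simp [Set.indicator, Set.mem_Ico, hs, h, not_le.2 hs, not_lt.2 hs.le]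

noncomputable def MRc (μ ν : Measure ℝ) (s t : ℝ) : ℝ :=
  if 0 ≤ s then
    (if 0 ≤ t then 1 - (μ (Iic s)).toReal - (ν (Iic t)).toReal else -(ν (Iic t)).toReal)
  else (if 0 ≤ t then -(μ (Iic s)).toReal else 0)

lemma MR_quadrant (μ ν : Measure ℝ) [IsProbabilityMeasure μ] [IsProbabilityMeasure ν]
    (S : ℝ → ℝ) (hS : Measurable S) (hmap : μ.map S = ν) (s t : ℝ) :
    ∫ x, MRe x s * MRe (S x) t ∂μ
      = (μ (Iic s ∩ S ⁻¹' (Iic t))).toReal + MRc μ ν s t := by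
  have hB : MeasurableSet (S ⁻¹' (Iic t)) := hS measurableSet_Iic
  have hμB : μ (S ⁻¹' (Iic t)) = ν (Iic t) := by
    rw [← hmap, Measure.map_apply hS measurableSet_Iic]
  have hne : ∀ A : Set ℝ, μ A ≠ ⊤ := fun A => measure_ne_top μ A
  by_cases hs : 0 ≤ s <;> by_cases ht : 0 ≤ t
  · -- s ≥ 0, t ≥ 0
    have hfun : (fun x => MRe x s * MRe (S x) t)
        = (Iic s ∪ S ⁻¹' (Iic t))ᶜ.indicator (fun _ => (1:ℝ)) := by
      funext x
      rw [MRe_of_nonneg _ hs, MRe_of_nonneg _ ht]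
      by_cases h1 : s < x <;> by_cases h2 : t < S x <;>
        simp [Set.indicator, mem_Iic, mem_preimage, h1, h2, not_lt.1, le_of_not_gt,
          not_le.2, not_or]
    rw [hfun, integral_indicator_const (1:ℝ) (measurableSet_Iic.union hB).compl,
      smul_eq_mul, mul_one, measureReal_def]
    have hc : μ ((Iic s ∪ S ⁻¹' (Iic t))ᶜ) = 1 - μ (Iic s ∪ S ⁻¹' (Iic t)) :=
      prob_compl_eq_one_sub (measurableSet_Iic.union hB)
    have hui : μ (Iic s ∪ S ⁻¹' (Iic t)) + μ (Iic s ∩ S ⁻¹' (Iic t))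
        = μ (Iic s) + μ (S ⁻¹' (Iic t)) := measure_union_add_inter _ hB
    have hc' : (μ ((Iic s ∪ S ⁻¹' (Iic t))ᶜ)).toReal
        = 1 - (μ (Iic s ∪ S ⁻¹' (Iic t))).toReal := by
      rw [hc, ENNReal.toReal_sub_of_le prob_le_one ENNReal.one_ne_top, ENNReal.toReal_one]
    have hui' : (μ (Iic s ∪ S ⁻¹' (Iic t))).toReal + (μ (Iic s ∩ S ⁻¹' (Iic t))).toReal
        = (μ (Iic s)).toReal + (ν (Iic t)).toReal := by
      rw [← hμB, ← ENNReal.toReal_add (hne _) (hne _), ← ENNReal.toReal_add (hne _) (hne _),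
        hui]
    rw [hc']
    simp only [MRc, hs, ht, if_true]
    linarith
  · -- s ≥ 0, t < 0
    have ht' : t < 0 := not_le.1 ht
    have hfun : (fun x => MRe x s * MRe (S x) t)
        = fun x => -((S ⁻¹' (Iic t) \ Iic s).indicator (fun _ => (1:ℝ)) x) := by
      funext x
      rw [MRe_of_nonneg _ hs, MRe_of_neg _ ht']
      by_cases h1 : s < x <;> by_cases h2 : S x ≤ t <;>
        simp [Set.indicator, mem_diff, mem_Iic, mem_preimage, h1, h2, not_lt.1, not_le.2]
    rw [hfun, integral_neg, integral_indicator_const (1:ℝ) (hB.diff measurableSet_Iic),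
      smul_eq_mul, mul_one, measureReal_def]
    have hid : μ (S ⁻¹' (Iic t) ∩ Iic s) + μ (S ⁻¹' (Iic t) \ Iic s) = μ (S ⁻¹' (Iic t)) :=
      measure_inter_add_diff _ measurableSet_Iic
    have hid' : (μ (Iic s ∩ S ⁻¹' (Iic t))).toReal + (μ (S ⁻¹' (Iic t) \ Iic s)).toReal
        = (ν (Iic t)).toReal := by
      rw [inter_comm, ← ENNReal.toReal_add (hne _) (hne _), hid, hμB]
    simp only [MRc, hs, if_true, ht, if_false]
    linarith
  · -- s < 0, t ≥ 0
    have hs' : s < 0 := not_le.1 hs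
    have hfun : (fun x => MRe x s * MRe (S x) t)
        = fun x => -((Iic s \ S ⁻¹' (Iic t)).indicator (fun _ => (1:ℝ)) x) := by
      funext x
      rw [MRe_of_neg _ hs', MRe_of_nonneg _ ht]
      by_cases h1 : x ≤ s <;> by_cases h2 : t < S x <;>
        simp [Set.indicator, mem_diff, mem_Iic, mem_preimage, h1, h2, not_lt.1, not_le.2]
    rw [hfun, integral_neg, integral_indicator_const (1:ℝ) (measurableSet_Iic.diff hB),
      smul_eq_mul, mul_one, measureReal_def]
    have hid : μ (Iic s ∩ S ⁻¹' (Iic t)) + μ (Iic s \ S ⁻¹' (Iic t)) = μ (Iic s) :=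
      measure_inter_add_diff _ hB
    have hid' : (μ (Iic s ∩ S ⁻¹' (Iic t))).toReal + (μ (Iic s \ S ⁻¹' (Iic t))).toReal
        = (μ (Iic s)).toReal := by
      rw [← ENNReal.toReal_add (hne _) (hne _), hid]
    simp only [MRc, hs, if_false, ht, if_true]
    linarith
  · -- s < 0, t < 0
    have hs' : s < 0 := not_le.1 hs
    have ht' : t < 0 := not_le.1 ht
    have hfun : (fun x => MRe x s * MRe (S x) t)
        = (Iic s ∩ S ⁻¹' (Iic t)).indicator (fun _ => (1:ℝ)) := by
      funext x
      rw [MRe_of_neg _ hs', MRe_of_neg _ ht']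
      by_cases h1 : x ≤ s <;> by_cases h2 : S x ≤ t <;>
        simp [Set.indicator, mem_inter_iff, mem_Iic, mem_preimage, h1, h2]
    rw [hfun, integral_indicator_const (1:ℝ) (measurableSet_Iic.inter hB),
      smul_eq_mul, mul_one, measureReal_def]
    simp only [MRc, hs, ht, if_false]
    ring

lemma MR_fubini (μ : Measure ℝ) [IsProbabilityMeasure μ] (S : ℝ → ℝ) (hS : Measurable S)
    (hint : Integrable (fun x => |x| * |S x|) μ) :
    (∫ x, x * S x ∂μ
        = ∫ p : ℝ × ℝ, (∫ x, MRe x p.1 * MRe (S x) p.2 ∂μ) ∂(volume : Measure (ℝ × ℝ)))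
    ∧ Integrable (fun p : ℝ × ℝ => ∫ x, MRe x p.1 * MRe (S x) p.2 ∂μ)
        (volume : Measure (ℝ × ℝ)) := by
  set f : ℝ × (ℝ × ℝ) → ℝ := fun z => MRe z.1 z.2.1 * MRe (S z.1) z.2.2 with hf
  have hfmeas : Measurable f := by
    apply Measurable.mul
    · exact MRe_meas.comp (measurable_fst.prodMk measurable_snd.fst)
    · exact MRe_meas.comp ((hS.comp measurable_fst).prodMk measurable_snd.snd)
  have hf_int : Integrable f (μ.prod (volume : Measure (ℝ × ℝ))) := by
    rw [integrable_prod_iff hfmeas.aestronglyMeasurable]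
    constructor
    · refine Filter.Eventually.of_forall fun x => ?_
      show Integrable (fun p : ℝ × ℝ => MRe x p.1 * MRe (S x) p.2) volume
      rw [MeasureTheory.Measure.volume_eq_prod]
      exact (MRe_int x).mul_prod (MRe_int (S x))
    · have heq : (fun x => ∫ p : ℝ × ℝ, ‖f (x, p)‖) = fun x => |x| * |S x| := by
        funext x
        show ∫ p : ℝ × ℝ, ‖MRe x p.1 * MRe (S x) p.2‖ = |x| * |S x|
        rw [MeasureTheory.Measure.volume_eq_prod]
        calc ∫ p : ℝ × ℝ, ‖MRe x p.1 * MRe (S x) p.2‖ ∂((volume : Measure ℝ).prod volume)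
            = ∫ p : ℝ × ℝ, |MRe x p.1| * |MRe (S x) p.2| ∂((volume : Measure ℝ).prod volume) := by
              simp only [Real.norm_eq_abs, abs_mul]
          _ = (∫ s, |MRe x s|) * (∫ u, |MRe (S x) u|) :=
              integral_prod_mul (fun s => |MRe x s|) (fun u => |MRe (S x) u|)
          _ = |x| * |S x| := by rw [MRe_abs_integral, MRe_abs_integral]
      show Integrable (fun x => ∫ p : ℝ × ℝ, ‖f (x, p)‖) μ
      rw [heq]
      exact hint
  have hinner : ∀ x, ∫ p : ℝ × ℝ, MRe x p.1 * MRe (S x) p.2 = x * S x := by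
    intro x
    rw [MeasureTheory.Measure.volume_eq_prod]
    rw [integral_prod_mul (MRe x) (MRe (S x)), MRe_integral, MRe_integral]
  constructor
  · have hswap := integral_integral_swap
      (f := fun x (p : ℝ × ℝ) => MRe x p.1 * MRe (S x) p.2) hf_int
    rw [← hswap]
    refine integral_congr_ae (Filter.Eventually.of_forall fun x => ?_)
    exact (hinner x).symm
  · have := (hf_int.swap).integral_prod_left
    simpa using this


/-- One-dimensional optimal transport: the monotone rearrangement
`T = F_ν⁻¹ ∘ F_μ` (with `μ` atomless) pushes `μ` forward to `ν` and minimizes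
the quadratic transport cost among all pushforward maps. -/
theorem monotone_rearrangement_optimal
    (μ ν : Measure ℝ) [IsProbabilityMeasure μ] [IsProbabilityMeasure ν]
    [NullSingletonClass μ]
    (hμ2 : Integrable (fun x => x ^ 2) μ) (hν2 : Integrable (fun x => x ^ 2) ν)
    (Fμ Fν : ℝ → ℝ)
    (hFμ : ∀ x, Fμ x = (μ (Set.Iic x)).toReal)
    (hFν : ∀ x, Fν x = (ν (Set.Iic x)).toReal)
    (T : ℝ → ℝ) (hT : ∀ x, T x = sInf {y : ℝ | Fμ x ≤ Fν y}) :
    μ.map T = ν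
    ∧ ∀ S : ℝ → ℝ, Measurable S → μ.map S = ν →
        ∫ x, (T x - x) ^ 2 ∂μ ≤ ∫ x, (S x - x) ^ 2 ∂μ := by
  have hFμc : ∀ x, Fμ x = cdf μ x := fun x => (hFμ x).trans (cdf_eq_real μ x).symm
  have hFνc : ∀ x, Fν x = cdf ν x := fun x => (hFν x).trans (cdf_eq_real ν x).symm
  have hT' : ∀ x, T x = sInf {y : ℝ | cdf μ x ≤ cdf ν y} := by
    intro x
    rw [hT x]
    congr 1
    ext y
    rw [Set.mem_setOf_eq, Set.mem_setOf_eq, hFμc, hFνc]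
  have hcdfμ_meas : Measurable (cdf μ) := (monotone_cdf μ).measurable
  have hcdfν_mono : Monotone (cdf ν) := monotone_cdf ν
  have hTiff : ∀ x, 0 < cdf μ x → cdf μ x < 1 → ∀ t, (T x ≤ t ↔ cdf μ x ≤ cdf ν t) := by
    intro x h0 h1 t
    rw [hT' x]
    exact MR_galois ν h0 h1 t
  set N : Set ℝ := {x | cdf μ x ≤ 0} ∪ {x | 1 ≤ cdf μ x} with hNdef
  have hN : μ N = 0 := by
    apply measure_union_null
    · have := MR_meas_cdf_le μ (by norm_num : (0:ℝ) ≤ 1)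
      simpa using this
    · exact MR_meas_cdf_ge_one μ
  have hnotN : ∀ x, x ∉ N → 0 < cdf μ x ∧ cdf μ x < 1 := by
    intro x hx
    rw [hNdef, Set.mem_union, Set.mem_setOf_eq, Set.mem_setOf_eq] at hx
    push_neg at hx
    exact ⟨hx.1, hx.2⟩
  have hAe : ∀ t, (T ⁻¹' (Iic t)) =ᵐ[μ] {x | cdf μ x ≤ cdf ν t} := by
    intro t
    rw [ae_eq_set]
    constructor
    · refine measure_mono_null (fun x hx => ?_) hN
      rw [Set.mem_diff] at hx
      by_contra hxN
      obtain ⟨h0, h1⟩ := hnotN x hxN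
      exact hx.2 ((hTiff x h0 h1 t).1 hx.1)
    · refine measure_mono_null (fun x hx => ?_) hN
      rw [Set.mem_diff] at hx
      by_contra hxN
      obtain ⟨h0, h1⟩ := hnotN x hxN
      exact hx.2 ((hTiff x h0 h1 t).2 hx.1)
  have hmeasT : Measurable T := by
    apply measurable_of_Iic
    intro t
    set c0 : ℝ := sInf {y : ℝ | (0:ℝ) ≤ cdf ν y} with hc0
    set c1 : ℝ := sInf {y : ℝ | (1:ℝ) ≤ cdf ν y} with hc1
    have hEq : T ⁻¹' (Iic t)
        = ({x | 0 < cdf μ x ∧ cdf μ x < 1} ∩ {x | cdf μ x ≤ cdf ν t})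
          ∪ ({x | cdf μ x ≤ 0} ∩ {x : ℝ | c0 ≤ t})
          ∪ ({x | 1 ≤ cdf μ x} ∩ {x : ℝ | c1 ≤ t}) := by
      ext x
      simp only [Set.mem_preimage, Set.mem_Iic, Set.mem_union, Set.mem_inter_iff,
        Set.mem_setOf_eq]
      rcases le_or_gt (cdf μ x) 0 with h0 | h0
      · have he : cdf μ x = 0 := le_antisymm h0 (cdf_nonneg μ x)
        have hTx : T x = c0 := by
          rw [hT' x, hc0, he]
        constructor
        · intro h
          exact Or.inl (Or.inr ⟨h0, by rwa [hTx] at h⟩)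
        · rintro ((⟨⟨ha, _⟩, _⟩ | ⟨_, hb⟩) | ⟨hc, _⟩)
          · exact absurd h0 (not_le.2 ha)
          · rwa [hTx]
          · exfalso; rw [he] at hc; norm_num at hc
      rcases lt_or_ge (cdf μ x) 1 with h1 | h1
      · constructor
        · intro h
          exact Or.inl (Or.inl ⟨⟨h0, h1⟩, (hTiff x h0 h1 t).1 h⟩)
        · rintro ((⟨_, hb⟩ | ⟨ha, _⟩) | ⟨hc, _⟩)
          · exact (hTiff x h0 h1 t).2 hb
          · exact absurd h0 (not_lt.2 ha)
          · exact absurd h1 (not_lt.2 hc)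
      · have he : cdf μ x = 1 := le_antisymm (cdf_le_one μ x) h1
        have hTx : T x = c1 := by
          rw [hT' x, hc1, he]
        constructor
        · intro h
          exact Or.inr ⟨h1, by rwa [hTx] at h⟩
        · rintro ((⟨⟨_, hb⟩, _⟩ | ⟨ha, _⟩) | ⟨_, hc⟩)
          · exact absurd h1 (not_le.2 hb)
          · exfalso; rw [he] at ha; norm_num at ha
          · rwa [hTx]
    rw [hEq]
    have m1 : MeasurableSet {x : ℝ | 0 < cdf μ x ∧ cdf μ x < 1} := by
      refine MeasurableSet.inter ?_ ?_
      · exact measurableSet_lt measurable_const hcdfμ_meas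
      · exact measurableSet_lt hcdfμ_meas measurable_const
    have m2 : MeasurableSet {x : ℝ | cdf μ x ≤ cdf ν t} :=
      measurableSet_le hcdfμ_meas measurable_const
    have m3 : MeasurableSet {x : ℝ | cdf μ x ≤ 0} :=
      measurableSet_le hcdfμ_meas measurable_const
    have m4 : MeasurableSet {x : ℝ | 1 ≤ cdf μ x} :=
      measurableSet_le measurable_const hcdfμ_meas
    have mconst : ∀ c : ℝ, MeasurableSet {x : ℝ | c ≤ t} := by
      intro c
      by_cases h : c ≤ t
      · simp [h]
      · simp [h]
    exact ((m1.inter m2).union (m3.inter (mconst c0))).union (m4.inter (mconst c1))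
  have hmapT : μ.map T = ν := by
    haveI : IsProbabilityMeasure (μ.map T) := Measure.isProbabilityMeasure_map hmeasT.aemeasurable
    refine Measure.ext_of_Iic (μ.map T) ν fun t => ?_
    rw [Measure.map_apply hmeasT measurableSet_Iic, measure_congr (hAe t),
      MR_meas_cdf_le μ (cdf_le_one ν t), ofReal_cdf]
  have hq_T : ∀ s t : ℝ, μ (Iic s ∩ T ⁻¹' (Iic t)) = min (μ (Iic s)) (ν (Iic t)) := by
    intro s t
    have h1 : μ (Iic s ∩ T ⁻¹' (Iic t)) = μ (Iic s ∩ {x | cdf μ x ≤ cdf ν t}) :=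
      measure_congr (ae_eq_set_inter (Filter.EventuallyEq.refl _ _) (hAe t))
    have hμA : μ {x | cdf μ x ≤ cdf ν t} = ν (Iic t) := by
      rw [MR_meas_cdf_le μ (cdf_le_one ν t), ofReal_cdf]
    have hlow1 : IsLowerSet (Iic s : Set ℝ) := isLowerSet_Iic s
    have hlow2 : IsLowerSet {x | cdf μ x ≤ cdf ν t} :=
      fun a b hba ha => le_trans (monotone_cdf μ hba) ha
    rw [h1]
    rcases hlow1.total hlow2 with h | h
    · rw [Set.inter_eq_self_of_subset_left h,
        min_eq_left (by rw [← hμA]; exact measure_mono h)]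
    · rw [Set.inter_eq_self_of_subset_right h, hμA,
        min_eq_right (by rw [← hμA]; exact measure_mono h)]
  refine ⟨hmapT, fun S hSmeas hSmap => ?_⟩
  have hmom : ∀ R : ℝ → ℝ, Measurable R → μ.map R = ν →
      Integrable (fun x => (R x) ^ 2) μ ∧ ∫ x, (R x) ^ 2 ∂μ = ∫ y, y ^ 2 ∂ν := by
    intro R hR hmapR
    have haesm : AEStronglyMeasurable (fun y : ℝ => y ^ 2) (μ.map R) :=
      (measurable_id.pow_const 2).aestronglyMeasurable
    constructor
    · have := (integrable_map_measure haesm hR.aemeasurable).1 (by rw [hmapR]; exact hν2)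
      exact this
    · rw [← hmapR, integral_map hR.aemeasurable haesm]
  have habs : ∀ R : ℝ → ℝ, Measurable R → Integrable (fun x => (R x) ^ 2) μ →
      Integrable (fun x => |x| * |R x|) μ := by
    intro R hR h2
    refine Integrable.mono ((hμ2.add h2).div_const 2)
      ((measurable_id.abs.mul hR.abs).aestronglyMeasurable) ?_
    refine Filter.Eventually.of_forall fun x => ?_
    simp only [Pi.add_apply, Real.norm_eq_abs]
    rw [abs_of_nonneg (by positivity : (0:ℝ) ≤ |x| * |R x|)]
    have h1 : |x| * |R x| ≤ (x ^ 2 + (R x) ^ 2) / 2 := by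
      nlinarith [sq_nonneg (|x| - |R x|), sq_abs x, sq_abs (R x)]
    exact h1.trans (le_abs_self _)
  have hmul : ∀ R : ℝ → ℝ, Measurable R → Integrable (fun x => (R x) ^ 2) μ →
      Integrable (fun x => x * R x) μ := by
    intro R hR h2
    refine Integrable.mono (habs R hR h2)
      ((measurable_id.mul hR).aestronglyMeasurable) ?_
    refine Filter.Eventually.of_forall fun x => ?_
    rw [Real.norm_eq_abs, Real.norm_eq_abs, abs_mul]
    exact le_abs_self _
  obtain ⟨hS2, hS2eq⟩ := hmom S hSmeas hSmap
  obtain ⟨hT2, hT2eq⟩ := hmom T hmeasT hmapT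
  have hIleq : ∫ x, x * S x ∂μ ≤ ∫ x, x * T x ∂μ := by
    obtain ⟨hSeq, hSint⟩ := MR_fubini μ S hSmeas (habs S hSmeas hS2)
    obtain ⟨hTeq, hTint⟩ := MR_fubini μ T hmeasT (habs T hmeasT hT2)
    rw [hSeq, hTeq]
    refine integral_mono hSint hTint fun p => ?_
    rw [MR_quadrant μ ν S hSmeas hSmap p.1 p.2, MR_quadrant μ ν T hmeasT hmapT p.1 p.2]
    apply add_le_add_left
    apply ENNReal.toReal_mono (measure_ne_top μ _)
    rw [hq_T p.1 p.2]
    refine le_min (measure_mono Set.inter_subset_left) ?_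
    calc μ (Iic p.1 ∩ S ⁻¹' (Iic p.2)) ≤ μ (S ⁻¹' (Iic p.2)) :=
          measure_mono Set.inter_subset_right
      _ = ν (Iic p.2) := by rw [← hSmap, Measure.map_apply hSmeas measurableSet_Iic]
  have hexp : ∀ R : ℝ → ℝ, Integrable (fun x => (R x) ^ 2) μ →
      Integrable (fun x => x * R x) μ →
      ∫ x, (R x - x) ^ 2 ∂μ
        = ∫ x, (R x) ^ 2 ∂μ - 2 * ∫ x, x * R x ∂μ + ∫ x, x ^ 2 ∂μ := by
    intro R h2 hx
    have h : (fun x => (R x - x) ^ 2) = fun x => ((R x) ^ 2 + x ^ 2) - 2 * (x * R x) := by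
      funext x; ring
    rw [h, integral_sub (show Integrable (fun x => (R x) ^ 2 + x ^ 2) μ from h2.add hμ2)
      (hx.const_mul 2)]
    rw [integral_add h2 hμ2, MeasureTheory.integral_const_mul]
    ring
  rw [hexp T hT2 (hmul T hmeasT hT2), hexp S hS2 (hmul S hSmeas hS2), hS2eq, hT2eq]
  linarith
end

section
/- Let μ, ν be probability measures on ℝᵈ with μ absolutely continuous, and let T = ∇φ be the Brenier map from μ to ν for a convex function φ. If S : ℝᵈ → ℝᵈ is any map with S_#μ = ν, then ∫ |S(x) − x|² dμ(x) ≥ ∫ |T(x) − x|² dμ(x). -/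
open MeasureTheory Filter Topology Set
open scoped ENNReal RealInnerProductSpace

noncomputable section

/-- Core analytic lemma: if `D m` is a sequence of integrable functions with zero mean
converging a.e. to a bound witness `W ≥ Gc - Fc` whose negative parts are dominated by
`(Fc - Gc)⁺`, then the lintegral of `Gc` is at most that of `Fc`. -/
lemma brenier_core {α : Type*} [MeasurableSpace α] {μ : Measure α} [IsProbabilityMeasure μ]
    {Fc Gc W : α → ℝ} {D : ℕ → α → ℝ}
    (hFc : Measurable Fc) (hGc : Measurable Gc)
    (hFc0 : ∀ x, 0 ≤ Fc x) (hGc0 : ∀ x, 0 ≤ Gc x)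
    (hFint : Integrable Fc μ)
    (hD_meas : ∀ m, Measurable (D m))
    (hD_int : ∀ m, Integrable (D m) μ)
    (hD_zero : ∀ m, ∫ x, D m x ∂μ = 0)
    (hW : ∀ᵐ x ∂μ, Tendsto (fun m => D m x) atTop (𝓝 (W x)))
    (hGFW : ∀ᵐ x ∂μ, Gc x - Fc x ≤ W x)
    (hDneg : ∀ᵐ x ∂μ, ∀ m, max (-(D m x)) 0 ≤ max (Fc x - Gc x) 0) :
    ∫⁻ x, ENNReal.ofReal (Gc x) ∂μ ≤ ∫⁻ x, ENNReal.ofReal (Fc x) ∂μ := by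
  have hFGp_meas : Measurable (fun x => max (Fc x - Gc x) 0) :=
    (hFc.sub hGc).max measurable_const
  have hFGp_int : Integrable (fun x => max (Fc x - Gc x) 0) μ := by
    refine hFint.mono' hFGp_meas.aestronglyMeasurable (ae_of_all _ fun x => ?_)
    rw [Real.norm_eq_abs, abs_of_nonneg (le_max_right _ _)]
    exact max_le (by linarith [hGc0 x]) (hFc0 x)
  have hminFG_meas : Measurable (fun x => min (Fc x) (Gc x)) := hFc.min hGc
  have hminFG_int : Integrable (fun x => min (Fc x) (Gc x)) μ := by
    refine hFint.mono' hminFG_meas.aestronglyMeasurable (ae_of_all _ fun x => ?_)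
    rw [Real.norm_eq_abs, abs_of_nonneg (le_min (hFc0 x) (hGc0 x))]
    exact min_le_left _ _
  have hDneg_meas : ∀ m, Measurable (fun x => max (-(D m x)) 0) :=
    fun m => (hD_meas m).neg.max measurable_const
  have hDneg_int : ∀ m, Integrable (fun x => max (-(D m x)) 0) μ := by
    intro m
    refine (hD_int m).abs.mono' (hDneg_meas m).aestronglyMeasurable (ae_of_all _ fun x => ?_)
    rw [Real.norm_eq_abs, abs_of_nonneg (le_max_right _ _)]
    exact max_le (neg_le_abs _) (abs_nonneg _)
  have hDpos_meas : ∀ m, Measurable (fun x => max (D m x) 0) :=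
    fun m => (hD_meas m).max measurable_const
  have hDpos_int : ∀ m, Integrable (fun x => max (D m x) 0) μ := by
    intro m
    refine (hD_int m).abs.mono' (hDpos_meas m).aestronglyMeasurable (ae_of_all _ fun x => ?_)
    rw [Real.norm_eq_abs, abs_of_nonneg (le_max_right _ _)]
    exact max_le (le_abs_self _) (abs_nonneg _)
  have hDnz : ∀ m, ∫ x, max (D m x) 0 ∂μ = ∫ x, max (-(D m x)) 0 ∂μ := by
    intro m
    have heq : (fun x => max (D m x) 0) = fun x => D m x + max (-(D m x)) 0 := by
      funext x
      rcases le_total (D m x) 0 with h | h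
      · rw [max_eq_right h, max_eq_left (by linarith)]; ring
      · rw [max_eq_left h, max_eq_right (by linarith)]; ring
    rw [heq, integral_add (hD_int m) (hDneg_int m), hD_zero m, zero_add]
  have h6 : ∀ m, ∫⁻ x, ENNReal.ofReal (D m x) ∂μ
      = ENNReal.ofReal (∫ x, max (-(D m x)) 0 ∂μ) := by
    intro m
    have e1 : ∀ x, ENNReal.ofReal (D m x) = ENNReal.ofReal (max (D m x) 0) := fun x => by
      rcases le_total (D m x) 0 with h | h
      · rw [max_eq_right h, ENNReal.ofReal_eq_zero.2 h, ENNReal.ofReal_zero]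
      · rw [max_eq_left h]
    rw [lintegral_congr e1,
      ← ofReal_integral_eq_lintegral_ofReal (hDpos_int m) (ae_of_all _ fun x => le_max_right _ _),
      hDnz m]
  have hWneg_tendsto : Tendsto (fun m => ∫ x, max (-(D m x)) 0 ∂μ) atTop
      (𝓝 (∫ x, max (-(W x)) 0 ∂μ)) := by
    refine tendsto_integral_of_dominated_convergence (fun x => max (Fc x - Gc x) 0)
      (fun m => (hDneg_meas m).aestronglyMeasurable) hFGp_int ?_ ?_
    · intro m
      filter_upwards [hDneg] with x hx
      rw [Real.norm_eq_abs, abs_of_nonneg (le_max_right _ _)]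
      exact hx m
    · filter_upwards [hW] with x hx
      exact hx.neg.max tendsto_const_nhds
  have hfatou : ∫⁻ x, ENNReal.ofReal (Gc x - Fc x) ∂μ
      ≤ ENNReal.ofReal (∫ x, max (-(W x)) 0 ∂μ) := by
    have step1 : ∫⁻ x, ENNReal.ofReal (Gc x - Fc x) ∂μ
        ≤ ∫⁻ x, liminf (fun m => ENNReal.ofReal (D m x)) atTop ∂μ := by
      refine lintegral_mono_ae ?_
      filter_upwards [hW, hGFW] with x hx hGF
      have ht : Tendsto (fun m => ENNReal.ofReal (D m x)) atTop
          (𝓝 (ENNReal.ofReal (W x))) := ENNReal.tendsto_ofReal hx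
      rw [ht.liminf_eq]
      exact ENNReal.ofReal_le_ofReal hGF
    refine step1.trans ?_
    refine (lintegral_liminf_le
      (fun m => ENNReal.measurable_ofReal.comp (hD_meas m))).trans ?_
    have ht2 : Tendsto (fun m => ∫⁻ x, ENNReal.ofReal (D m x) ∂μ) atTop
        (𝓝 (ENNReal.ofReal (∫ x, max (-(W x)) 0 ∂μ))) :=
      (ENNReal.tendsto_ofReal hWneg_tendsto).congr fun m => (h6 m).symm
    exact le_of_eq ht2.liminf_eq
  have hWneg_aesm : AEStronglyMeasurable (fun x => max (-(W x)) 0) μ := by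
    refine aestronglyMeasurable_of_tendsto_ae atTop
      (fun m => (hDneg_meas m).aestronglyMeasurable) ?_
    filter_upwards [hW] with x hx
    exact hx.neg.max tendsto_const_nhds
  have hWneg_le_ptwise : ∀ᵐ x ∂μ, max (-(W x)) 0 ≤ max (Fc x - Gc x) 0 := by
    filter_upwards [hW, hDneg] with x hx hDn
    exact le_of_tendsto (hx.neg.max tendsto_const_nhds) (Eventually.of_forall fun m => hDn m)
  have hWneg_int : Integrable (fun x => max (-(W x)) 0) μ := by
    refine hFGp_int.mono' hWneg_aesm ?_
    filter_upwards [hWneg_le_ptwise] with x hx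
    rw [Real.norm_eq_abs, abs_of_nonneg (le_max_right _ _)]
    exact hx
  have hWneg_le : ∫ x, max (-(W x)) 0 ∂μ ≤ ∫ x, max (Fc x - Gc x) 0 ∂μ :=
    integral_mono_ae hWneg_int hFGp_int hWneg_le_ptwise
  calc ∫⁻ x, ENNReal.ofReal (Gc x) ∂μ
      = ∫⁻ x, (ENNReal.ofReal (Gc x - Fc x) + ENNReal.ofReal (min (Fc x) (Gc x))) ∂μ := by
        refine lintegral_congr fun x => ?_
        rcases le_total (Gc x) (Fc x) with h | h
        · have h0 : ENNReal.ofReal (Gc x - Fc x) = 0 :=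
            ENNReal.ofReal_eq_zero.2 (by linarith)
          rw [min_eq_right h, h0, zero_add]
        · rw [min_eq_left h, ← ENNReal.ofReal_add (by linarith) (hFc0 x), sub_add_cancel]
    _ = ∫⁻ x, ENNReal.ofReal (Gc x - Fc x) ∂μ
        + ∫⁻ x, ENNReal.ofReal (min (Fc x) (Gc x)) ∂μ :=
        lintegral_add_left (ENNReal.measurable_ofReal.comp (hGc.sub hFc)) _
    _ ≤ ENNReal.ofReal (∫ x, max (-(W x)) 0 ∂μ)
        + ENNReal.ofReal (∫ x, min (Fc x) (Gc x) ∂μ) := by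
        refine add_le_add hfatou (le_of_eq ?_)
        exact (ofReal_integral_eq_lintegral_ofReal hminFG_int
          (ae_of_all _ fun x => le_min (hFc0 x) (hGc0 x))).symm
    _ ≤ ENNReal.ofReal (∫ x, max (Fc x - Gc x) 0 ∂μ)
        + ENNReal.ofReal (∫ x, min (Fc x) (Gc x) ∂μ) :=
        add_le_add (ENNReal.ofReal_le_ofReal hWneg_le) le_rfl
    _ = ENNReal.ofReal (∫ x, (max (Fc x - Gc x) 0 + min (Fc x) (Gc x)) ∂μ) := by
        rw [integral_add hFGp_int hminFG_int]
        exact (ENNReal.ofReal_add (integral_nonneg fun x => le_max_right _ _)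
          (integral_nonneg fun x => le_min (hFc0 x) (hGc0 x))).symm
    _ = ENNReal.ofReal (∫ x, Fc x ∂μ) := by
        congr 1
        refine integral_congr_ae (ae_of_all _ fun x => ?_)
        show max (Fc x - Gc x) 0 + min (Fc x) (Gc x) = Fc x
        rcases le_total (Gc x) (Fc x) with h | h
        · rw [max_eq_left (by linarith), min_eq_right h]; ring
        · rw [max_eq_right (by linarith), min_eq_left h]; ring
    _ = ∫⁻ x, ENNReal.ofReal (Fc x) ∂μ :=
        ofReal_integral_eq_lintegral_ofReal hFint (ae_of_all _ hFc0)


/-- Clamp a real number to the interval `[-m, m]`. -/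
def bclamp (m t : ℝ) : ℝ := max (-m) (min m t)

lemma bclamp_le {m : ℝ} (hm : 0 ≤ m) (t : ℝ) : bclamp m t ≤ m :=
  max_le (by linarith) (min_le_left _ _)

lemma neg_le_bclamp (m t : ℝ) : -m ≤ bclamp m t := le_max_left _ _

lemma abs_bclamp_le {m : ℝ} (hm : 0 ≤ m) (t : ℝ) : |bclamp m t| ≤ m :=
  abs_le.2 ⟨neg_le_bclamp m t, bclamp_le hm t⟩

lemma bclamp_mono (m : ℝ) : Monotone (bclamp m) := fun a b hab =>
  max_le_max le_rfl (min_le_min le_rfl hab)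

lemma abs_min_const_sub (c a b : ℝ) : |min c a - min c b| ≤ |a - b| := by
  have h := abs_max_sub_max_le_abs (-a) (-b) (-c)
  rw [max_neg_neg, max_neg_neg, neg_sub_neg, neg_sub_neg] at h
  calc |min c a - min c b| = |min b c - min a c| := by
        rw [abs_sub_comm, min_comm c a, min_comm c b]
    _ ≤ |b - a| := h
    _ = |a - b| := abs_sub_comm b a

lemma bclamp_lipschitz (m a b : ℝ) : |bclamp m a - bclamp m b| ≤ |a - b| := by
  have h1 : |bclamp m a - bclamp m b| ≤ |min m a - min m b| := by
    simpa [bclamp, max_comm] using abs_max_sub_max_le_abs (min m a) (min m b) (-m)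
  exact h1.trans (abs_min_const_sub m a b)

lemma bclamp_eq_self {m t : ℝ} (h : |t| ≤ m) : bclamp m t = t := by
  rw [bclamp, min_eq_right (abs_le.1 h).2, max_eq_right (abs_le.1 h).1]

lemma bclamp_continuous (m : ℝ) : Continuous (bclamp m) :=
  continuous_const.max (continuous_const.min continuous_id)

lemma inner_gradient_le_of_convexOn {E : Type*} [NormedAddCommGroup E]
    [InnerProductSpace ℝ E] [CompleteSpace E] {φ : E → ℝ}
    (hconv : ConvexOn ℝ Set.univ φ) (hdiff : Differentiable ℝ φ) (x z : E) :
    φ x + ⟪gradient φ x, z - x⟫ ≤ φ z := by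
  have h1 : HasDerivAt (fun t : ℝ => x + t • (z - x)) (z - x) 0 := by
    simpa using ((hasDerivAt_id (0:ℝ)).smul_const (z - x)).const_add x
  have h2 : HasDerivAt (fun t : ℝ => φ (x + t • (z - x)))
      (fderiv ℝ φ (x + (0:ℝ) • (z - x)) (z - x)) 0 :=
    (hdiff _).hasFDerivAt.comp_hasDerivAt 0 h1
  simp only [zero_smul, add_zero] at h2
  have hslope : Tendsto (slope (fun t : ℝ => φ (x + t • (z - x))) 0) (𝓝[>] 0)
      (𝓝 (fderiv ℝ φ x (z - x))) := by
    refine (hasDerivAt_iff_tendsto_slope.mp h2).mono_left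
      (nhdsWithin_mono 0 ?_)
    intro t ht
    exact ne_of_gt ht
  have hbound : ∀ᶠ t in 𝓝[>] (0:ℝ),
      slope (fun t : ℝ => φ (x + t • (z - x))) 0 t ≤ φ z - φ x := by
    filter_upwards [Ioc_mem_nhdsGT (zero_lt_one (α := ℝ))] with t ht
    have hconvineq : φ (x + t • (z - x)) ≤ (1 - t) * φ x + t * φ z := by
      have heq : x + t • (z - x) = (1 - t) • x + t • z := by
        rw [smul_sub, sub_smul, one_smul]; abel
      rw [heq]
      exact hconv.2 (mem_univ x) (mem_univ z) (by linarith [ht.2]) ht.1.le (by ring)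
    rw [slope_def_field]
    simp only [zero_smul, add_zero, sub_zero]
    rw [div_le_iff₀ ht.1]
    nlinarith [ht.1]
  have key : fderiv ℝ φ x (z - x) ≤ φ z - φ x := le_of_tendsto hslope hbound
  have hg : ⟪gradient φ x, z - x⟫ = fderiv ℝ φ x (z - x) :=
    InnerProductSpace.toDual_symm_apply
  linarith

lemma measurable_gradient' {E : Type*} [NormedAddCommGroup E]
    [InnerProductSpace ℝ E] [CompleteSpace E] [MeasurableSpace E] [BorelSpace E]
    [SecondCountableTopology E] (φ : E → ℝ) :
    Measurable (fun x => gradient φ x) := by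
  exact (LinearIsometryEquiv.continuous _).measurable.comp (measurable_fderiv ℝ φ)

/-- Optimality part of Brenier's theorem: if the gradient of a convex function
`φ` pushes the absolutely continuous measure `μ` forward to `ν`, then it
minimizes the quadratic transport cost among all pushforward maps. -/
theorem brenier_map_optimal
    {d : ℕ} (μ ν : Measure (EuclideanSpace ℝ (Fin d)))
    [IsProbabilityMeasure μ] [IsProbabilityMeasure ν]
    (hac : μ ≪ volume)
    (φ : EuclideanSpace ℝ (Fin d) → ℝ)
    (hφconv : ConvexOn ℝ Set.univ φ) (hφdiff : Differentiable ℝ φ)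
    (hpush : μ.map (fun x => gradient φ x) = ν)
    (S : EuclideanSpace ℝ (Fin d) → EuclideanSpace ℝ (Fin d))
    (hS : Measurable S) (hSpush : μ.map S = ν) :
    ∫⁻ x, (‖gradient φ x - x‖₊ : ℝ≥0∞) ^ 2 ∂μ
      ≤ ∫⁻ x, (‖S x - x‖₊ : ℝ≥0∞) ^ 2 ∂μ := by
  classical
  -- trivial case: infinite right-hand side
  by_cases htop : ∫⁻ x, (‖S x - x‖₊ : ℝ≥0∞) ^ 2 ∂μ = ⊤
  · rw [htop]; exact le_top
  -- abbreviations
  set T : EuclideanSpace ℝ (Fin d) → EuclideanSpace ℝ (Fin d) :=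
    fun x => gradient φ x with hTdef
  have hT : Measurable T := measurable_gradient' φ
  have hφc : Continuous φ := hφdiff.continuous
  haveI : Nonempty (EuclideanSpace ℝ (Fin d)) := ⟨0⟩
  obtain ⟨z, hz⟩ : ∃ z : ℕ → EuclideanSpace ℝ (Fin d), DenseRange z :=
    ⟨TopologicalSpace.denseSeq _, TopologicalSpace.denseRange_denseSeq _⟩
  set g : ℕ → EuclideanSpace ℝ (Fin d) → ℝ :=
    fun n y => ‖y‖ ^ 2 - 2 * (⟪z n, y⟫ - φ (z n)) with hgdef
  set β : EuclideanSpace ℝ (Fin d) → ℝ :=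
    fun x => ‖T x‖ ^ 2 - 2 * (⟪x, T x⟫ - φ x) with hβdef
  set γ : EuclideanSpace ℝ (Fin d) → ℝ :=
    fun x => ‖S x‖ ^ 2 - 2 * (⟪x, S x⟫ - φ x) with hγdef
  set Fc : EuclideanSpace ℝ (Fin d) → ℝ := fun x => ‖S x - x‖ ^ 2 with hFcdef
  set Gc : EuclideanSpace ℝ (Fin d) → ℝ := fun x => ‖T x - x‖ ^ 2 with hGcdef
  have hg_cont : ∀ n, Continuous (g n) := fun n =>
    (continuous_norm.pow 2).sub
      (continuous_const.mul ((continuous_const.inner continuous_id).sub continuous_const))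
  have hg_meas : ∀ n, Measurable (g n) := fun n => (hg_cont n).measurable
  have hFc_meas : Measurable Fc := (hS.sub measurable_id).norm.pow_const 2
  have hGc_meas : Measurable Gc := (hT.sub measurable_id).norm.pow_const 2
  have hFc0 : ∀ x, 0 ≤ Fc x := fun x => sq_nonneg _
  have hGc0 : ∀ x, 0 ≤ Gc x := fun x => sq_nonneg _
  -- the key identity Gc - Fc = β - γ
  have hGF : ∀ x, Gc x - Fc x = β x - γ x := by
    intro x
    simp only [hGcdef, hFcdef, hβdef, hγdef]
    rw [norm_sub_sq_real, norm_sub_sq_real]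
    have h1 : ⟪T x, x⟫ = ⟪x, T x⟫ := real_inner_comm _ _
    have h2 : ⟪S x, x⟫ = ⟪x, S x⟫ := real_inner_comm _ _
    linarith
  -- the gradient inequality gives the lower bound for g n ∘ T
  have hgβ : ∀ (n : ℕ) (x), β x ≤ g n (T x) := by
    intro n x
    have h := inner_gradient_le_of_convexOn hφconv hφdiff x (z n)
    have hTx : T x = gradient φ x := rfl
    rw [← hTx] at h
    have h2 : ⟪T x, z n - x⟫ = ⟪z n, T x⟫ - ⟪x, T x⟫ := by
      rw [inner_sub_right, real_inner_comm (T x) (z n), real_inner_comm (T x) x]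
    rw [h2] at h
    simp only [hβdef, hgdef]
    linarith
  -- density: the infimum over the countable family approximates the Legendre value
  have hdense : ∀ (x y : EuclideanSpace ℝ (Fin d)) (ε : ℝ), 0 < ε →
      ∃ n, g n y < (‖y‖ ^ 2 - 2 * (⟪x, y⟫ - φ x)) + ε := by
    intro x y ε hε
    have hcont : Continuous (fun w : EuclideanSpace ℝ (Fin d) => ⟪w, y⟫ - φ w) :=
      (continuous_id.inner continuous_const).sub hφc
    have hopen : IsOpen {w : EuclideanSpace ℝ (Fin d) |
        |(⟪w, y⟫ - φ w) - (⟪x, y⟫ - φ x)| < ε / 2} := by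
      have heq : {w : EuclideanSpace ℝ (Fin d) |
          |(⟪w, y⟫ - φ w) - (⟪x, y⟫ - φ x)| < ε / 2}
          = (fun w : EuclideanSpace ℝ (Fin d) => ⟪w, y⟫ - φ w) ⁻¹'
            Metric.ball (⟪x, y⟫ - φ x) (ε / 2) := by
        ext w
        simp only [mem_setOf_eq, mem_preimage, Metric.mem_ball, Real.dist_eq]
      rw [heq]
      exact Metric.isOpen_ball.preimage hcont
    have hne : {w : EuclideanSpace ℝ (Fin d) |
        |(⟪w, y⟫ - φ w) - (⟪x, y⟫ - φ x)| < ε / 2}.Nonempty :=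
      ⟨x, by simp only [mem_setOf_eq, sub_self, abs_zero]; exact half_pos hε⟩
    obtain ⟨n, hn⟩ := hz.exists_mem_open hopen hne
    refine ⟨n, ?_⟩
    simp only [mem_setOf_eq] at hn
    have h1 := (abs_lt.1 hn).1
    simp only [hgdef]
    linarith
  -- the clamped infima
  set bm : ℕ → EuclideanSpace ℝ (Fin d) → ℝ :=
    fun m y => ⨅ n, bclamp (m : ℝ) (g n y) with hbmdef
  have hbm_bdd : ∀ (m : ℕ) y, BddBelow (range fun n => bclamp (m : ℝ) (g n y)) := by
    intro m y
    refine ⟨-(m : ℝ), ?_⟩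
    rintro t ⟨n, rfl⟩
    exact neg_le_bclamp _ _
  have hbm_meas : ∀ m, Measurable (bm m) := fun m =>
    Measurable.iInf fun n => ((bclamp_continuous (m : ℝ)).measurable).comp (hg_meas n)
  have hbm_le : ∀ (m : ℕ) y, bm m y ≤ (m : ℝ) := fun m y =>
    ciInf_le_of_le (hbm_bdd m y) 0 (bclamp_le (Nat.cast_nonneg m) _)
  have hle_bm : ∀ (m : ℕ) y, -(m : ℝ) ≤ bm m y := fun m y =>
    le_ciInf fun n => neg_le_bclamp _ _
  have habs_bm : ∀ (m : ℕ) y, |bm m y| ≤ (m : ℝ) := fun m y =>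
    abs_le.2 ⟨hle_bm m y, hbm_le m y⟩
  -- value along T
  have hbmT : ∀ (m : ℕ) x, bm m (T x) = bclamp (m : ℝ) (β x) := by
    intro m x
    have hβx : β x = ‖T x‖ ^ 2 - 2 * (⟪x, T x⟫ - φ x) := rfl
    apply le_antisymm
    · apply _root_.le_of_forall_pos_le_add
      intro ε hε
      obtain ⟨n, hn⟩ := hdense x (T x) ε hε
      rw [← hβx] at hn
      have h1 : bm m (T x) ≤ bclamp (m : ℝ) (g n (T x)) := ciInf_le (hbm_bdd m _) n
      have h2 : bclamp (m : ℝ) (g n (T x)) ≤ bclamp (m : ℝ) (β x + ε) :=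
        bclamp_mono _ hn.le
      have h3 := abs_le.1 (bclamp_lipschitz (m : ℝ) (β x + ε) (β x))
      have h4 : |β x + ε - β x| = ε := by
        rw [add_sub_cancel_left, abs_of_pos hε]
      rw [h4] at h3
      linarith [h3.2]
    · exact le_ciInf fun n => bclamp_mono _ (hgβ n x)
  -- the inf function on the target space
  set bS : EuclideanSpace ℝ (Fin d) → ℝ := fun y => ⨅ n, g n y with hbSdef
  have hbS_meas : Measurable bS := Measurable.iInf hg_meas
  -- on the good set, bm m y = bclamp m (bS y)
  have hbm_clamp : ∀ (m : ℕ) (y : EuclideanSpace ℝ (Fin d)),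
      BddBelow (range fun n => g n y) → bm m y = bclamp (m : ℝ) (bS y) := by
    intro m y hy
    rw [hbmdef, hbSdef]
    exact (Monotone.map_ciInf_of_continuousAt
      ((bclamp_continuous (m : ℝ)).continuousAt) (bclamp_mono (m : ℝ)) hy).symm
  -- on the good set, bS ∘ S ≤ γ
  have hbSγ : ∀ x, BddBelow (range fun n => g n (S x)) → bS (S x) ≤ γ x := by
    intro x hx
    apply _root_.le_of_forall_pos_le_add
    intro ε hε
    obtain ⟨n, hn⟩ := hdense x (S x) ε hε
    have hγx : γ x = ‖S x‖ ^ 2 - 2 * (⟪x, S x⟫ - φ x) := rfl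
    rw [← hγx] at hn
    exact le_trans (ciInf_le hx n) hn.le
  -- the good set has full measure
  have hTA : ∀ x, BddBelow (range fun n => g n (T x)) := by
    intro x
    refine ⟨β x, ?_⟩
    rintro t ⟨n, rfl⟩
    exact hgβ n x
  have hSA : ∀ᵐ x ∂μ, BddBelow (range fun n => g n (S x)) := by
    set Aset : Set (EuclideanSpace ℝ (Fin d)) :=
      {y | BddBelow (range fun n => g n y)} with hAdef
    have hAmeas : MeasurableSet Aset := measurableSet_bddBelow_range hg_meas
    have h1 : μ (S ⁻¹' Asetᶜ) = ν Asetᶜ := by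
      rw [← hSpush, Measure.map_apply hS hAmeas.compl]
    have h2 : ν Asetᶜ = μ (T ⁻¹' Asetᶜ) := by
      rw [← hpush, Measure.map_apply hT hAmeas.compl]
    have h3 : T ⁻¹' Asetᶜ = ∅ := by
      ext x
      simp only [mem_preimage, mem_compl_iff, mem_empty_iff_false, iff_false, not_not]
      exact hTA x
    rw [ae_iff]
    have h4 : {x | ¬ BddBelow (range fun n => g n (S x))} = S ⁻¹' Asetᶜ := rfl
    rw [h4, h1, h2, h3, measure_empty]
  -- define D and W
  set D : ℕ → EuclideanSpace ℝ (Fin d) → ℝ :=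
    fun m x => bm m (T x) - bm m (S x) with hDdef
  set W : EuclideanSpace ℝ (Fin d) → ℝ := fun x => β x - bS (S x) with hWdef
  have hD_meas : ∀ m, Measurable (D m) := fun m =>
    ((hbm_meas m).comp hT).sub ((hbm_meas m).comp hS)
  have hD_int : ∀ m, Integrable (D m) μ := by
    intro m
    refine Integrable.mono' (integrable_const (2 * (m : ℝ)))
      (hD_meas m).aestronglyMeasurable (ae_of_all _ fun x => ?_)
    rw [Real.norm_eq_abs]
    have h1 := abs_le.1 (habs_bm m (T x))
    have h2 := abs_le.1 (habs_bm m (S x))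
    have hDeq : D m x = bm m (T x) - bm m (S x) := rfl
    rw [hDeq, abs_le]
    constructor <;> nlinarith [h1.1, h1.2, h2.1, h2.2]
  have hbmT_int : ∀ m, Integrable (fun x => bm m (T x)) μ := by
    intro m
    refine Integrable.mono' (integrable_const (m : ℝ))
      ((hbm_meas m).comp hT).aestronglyMeasurable (ae_of_all _ fun x => ?_)
    rw [Real.norm_eq_abs]; exact habs_bm m (T x)
  have hbmS_int : ∀ m, Integrable (fun x => bm m (S x)) μ := by
    intro m
    refine Integrable.mono' (integrable_const (m : ℝ))
      ((hbm_meas m).comp hS).aestronglyMeasurable (ae_of_all _ fun x => ?_)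
    rw [Real.norm_eq_abs]; exact habs_bm m (S x)
  have hD_zero : ∀ m, ∫ x, D m x ∂μ = 0 := by
    intro m
    have h1 : ∫ y, bm m y ∂ν = ∫ x, bm m (T x) ∂μ := by
      rw [← hpush]
      exact integral_map hT.aemeasurable (hbm_meas m).aestronglyMeasurable
    have h2 : ∫ y, bm m y ∂ν = ∫ x, bm m (S x) ∂μ := by
      rw [← hSpush]
      exact integral_map hS.aemeasurable (hbm_meas m).aestronglyMeasurable
    show ∫ x, (bm m (T x) - bm m (S x)) ∂μ = 0
    rw [integral_sub (hbmT_int m) (hbmS_int m), ← h1, ← h2, sub_self]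
  -- a.e. convergence of D to W
  have hW_tendsto : ∀ᵐ x ∂μ, Tendsto (fun m => D m x) atTop (𝓝 (W x)) := by
    filter_upwards [hSA] with x hx
    obtain ⟨N, hN⟩ := exists_nat_ge (max |β x| |bS (S x)|)
    have hev : ∀ᶠ m in atTop, D m x = W x := by
      filter_upwards [eventually_ge_atTop N] with m hm
      have hmR : max |β x| |bS (S x)| ≤ (m : ℝ) :=
        le_trans hN (Nat.cast_le.2 hm)
      show bm m (T x) - bm m (S x) = β x - bS (S x)
      rw [hbmT m x, hbm_clamp m (S x) hx,
        bclamp_eq_self (le_trans (le_max_left _ _) hmR),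
        bclamp_eq_self (le_trans (le_max_right _ _) hmR)]
    exact tendsto_const_nhds.congr' (hev.mono fun m hm => hm.symm)
  -- a.e. Gc - Fc ≤ W
  have hGFW : ∀ᵐ x ∂μ, Gc x - Fc x ≤ W x := by
    filter_upwards [hSA] with x hx
    have hWx : W x = β x - bS (S x) := rfl
    rw [hWx, hGF x]
    linarith [hbSγ x hx]
  -- a.e. bound on the negative parts
  have hDneg : ∀ᵐ x ∂μ, ∀ m, max (-(D m x)) 0 ≤ max (Fc x - Gc x) 0 := by
    filter_upwards [hSA] with x hx
    intro m
    have hbmS_eq : bm m (S x) = bclamp (m : ℝ) (bS (S x)) := hbm_clamp m (S x) hx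
    have hbmS_le : bm m (S x) ≤ bclamp (m : ℝ) (γ x) := by
      rw [hbmS_eq]; exact bclamp_mono _ (hbSγ x hx)
    have hDx : -(D m x) ≤ bclamp (m : ℝ) (γ x) - bclamp (m : ℝ) (β x) := by
      have hDeq : D m x = bclamp (m : ℝ) (β x) - bm m (S x) := by
        show bm m (T x) - bm m (S x) = _
        rw [hbmT m x]
      rw [hDeq]
      linarith
    have hFG : Fc x - Gc x = γ x - β x := by linarith [hGF x]
    rcases le_total (γ x) (β x) with h | h
    · have h1 : bclamp (m : ℝ) (γ x) ≤ bclamp (m : ℝ) (β x) := bclamp_mono _ h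
      exact max_le (by linarith [le_max_right (Fc x - Gc x) (0:ℝ)]) (le_max_right _ _)
    · have h1 : bclamp (m : ℝ) (γ x) - bclamp (m : ℝ) (β x) ≤ γ x - β x := by
        have h2 := abs_le.1 (bclamp_lipschitz (m : ℝ) (γ x) (β x))
        have h3 : |γ x - β x| = γ x - β x := abs_of_nonneg (by linarith)
        rw [h3] at h2
        exact h2.2
      refine max_le ?_ (le_max_right _ _)
      calc -(D m x) ≤ γ x - β x := le_trans hDx h1
        _ = Fc x - Gc x := hFG.symm
        _ ≤ max (Fc x - Gc x) 0 := le_max_left _ _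
  -- integrability of Fc
  have hFint : Integrable Fc μ := by
    refine ⟨hFc_meas.aestronglyMeasurable, ?_⟩
    have heq : ∫⁻ x, (‖Fc x‖₊ : ℝ≥0∞) ∂μ = ∫⁻ x, (‖S x - x‖₊ : ℝ≥0∞) ^ 2 ∂μ := by
      refine lintegral_congr fun x => ?_
      show (‖(‖S x - x‖ ^ 2 : ℝ)‖₊ : ℝ≥0∞) = (‖S x - x‖₊ : ℝ≥0∞) ^ 2
      rw [← enorm_eq_nnnorm, ← enorm_eq_nnnorm, ← ofReal_norm, ← ofReal_norm,
        Real.norm_eq_abs, abs_of_nonneg (sq_nonneg _), ← ENNReal.ofReal_pow (norm_nonneg _)]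
    rw [HasFiniteIntegral]
    simp only [enorm_eq_nnnorm]
    rw [heq]
    exact lt_top_iff_ne_top.2 htop
  -- apply the core lemma
  have main := brenier_core hFc_meas hGc_meas hFc0 hGc0 hFint hD_meas hD_int hD_zero
    hW_tendsto hGFW hDneg
  -- convert the goal
  have hconvG : ∫⁻ x, (‖gradient φ x - x‖₊ : ℝ≥0∞) ^ 2 ∂μ
      = ∫⁻ x, ENNReal.ofReal (Gc x) ∂μ := by
    refine lintegral_congr fun x => ?_
    have hGx : Gc x = ‖gradient φ x - x‖ ^ 2 := rfl
    rw [hGx, ENNReal.ofReal_pow (norm_nonneg _), ofReal_norm, enorm_eq_nnnorm]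
  have hconvF : ∫⁻ x, (‖S x - x‖₊ : ℝ≥0∞) ^ 2 ∂μ
      = ∫⁻ x, ENNReal.ofReal (Fc x) ∂μ := by
    refine lintegral_congr fun x => ?_
    have hFx : Fc x = ‖S x - x‖ ^ 2 := rfl
    rw [hFx, ENNReal.ofReal_pow (norm_nonneg _), ofReal_norm, enorm_eq_nnnorm]
  rw [hconvG, hconvF]
  exact main

end
end
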